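/- Let S = ⟨m, n_1, ..., n_{m-1}⟩ be a maximal embedding dimension numerical semigroup with multiplicity m, where n_i ≡ i (mod m). Let b be the smallest Betti element of S in its residue class k mod m. If k = 0 or gcd(k, m) = 1, then |L(b)| ≤ 2. -/

import Mathlib

open Finset

namespace LengthDensity

/-- The set of factorizations of `n` with respect to generators `g`. -/
def facs {k : ℕ} (g : Fin k → ℕ) (n : ℕ) : Set (Fin k → ℕ) :=
  {z | ∑ i, z i * g i = n}

/-- Membership in the numerical semigroup generated by `g`. -/
def mem {k : ℕ} (g : Fin k → ℕ) (n : ℕ) : Prop := (facs g n).Nonempty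

/-- The set of factorization lengths of `n`. -/
def lengthSet {k : ℕ} (g : Fin k → ℕ) (n : ℕ) : Set ℕ :=
  (fun z => ∑ i, z i) '' facs g n

/-- Length density of an element. -/
noncomputable def LD {k : ℕ} (g : Fin k → ℕ) (n : ℕ) : ℝ :=
  (((lengthSet g n).ncard : ℝ) - 1) /
    (((sSup (lengthSet g n) : ℕ) : ℝ) - ((sInf (lengthSet g n) : ℕ) : ℝ))

/-- Length density of the semigroup: infimum of `LD` over elements with
non-singleton length set. -/
noncomputable def LDsgp {k : ℕ} (g : Fin k → ℕ) : ℝ :=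
  sInf {x : ℝ | ∃ n : ℕ, 2 ≤ (lengthSet g n).ncard ∧ x = LD g n}

/-- The delta set (successive gaps) of a set of naturals. -/
def deltaOf (L : Set ℕ) : Set ℕ :=
  {d | ∃ a ∈ L, ∃ b ∈ L, a < b ∧ (∀ c ∈ L, ¬(a < c ∧ c < b)) ∧ d = b - a}

/-- The delta set of an element. -/
def delta {k : ℕ} (g : Fin k → ℕ) (n : ℕ) : Set ℕ := deltaOf (lengthSet g n)

/-- The delta set of the semigroup. -/
def Delta {k : ℕ} (g : Fin k → ℕ) : Set ℕ := ⋃ n : ℕ, delta g n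

/-- Adjacency in the factorization graph of `n`: two factorizations of `n`
sharing a positive coordinate. -/
def adj {k : ℕ} (g : Fin k → ℕ) (n : ℕ) (z z' : Fin k → ℕ) : Prop :=
  z ∈ facs g n ∧ z' ∈ facs g n ∧ ∃ i, 0 < z i ∧ 0 < z' i

/-- `n` is a Betti element: its factorization graph is disconnected. -/
def IsBetti {k : ℕ} (g : Fin k → ℕ) (n : ℕ) : Prop :=
  ∃ z ∈ facs g n, ∃ z' ∈ facs g n, ¬ Relation.ReflTransGen (adj g n) z z'

/-- The semigroup is tasty: `LD(S) > 1 / max Δ(S)`. -/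
def Tasty {k : ℕ} (g : Fin k → ℕ) : Prop := LDsgp g > 1 / ((sSup (Delta g) : ℕ) : ℝ)

/-- The semigroup is bland: `LD(S) = 1 / max Δ(S)`. -/
def Bland {k : ℕ} (g : Fin k → ℕ) : Prop := LDsgp g = 1 / ((sSup (Delta g) : ℕ) : ℝ)

/-- `g` is a minimal generating set: no generator is a nonnegative integer
combination of the others. -/
def IsMinGen {k : ℕ} (g : Fin k → ℕ) : Prop :=
  ∀ i, ¬ ∃ z : Fin k → ℕ, z i = 0 ∧ ∑ j, z j * g j = g i

/-- `n` is a non-atom of the semigroup generated by `g`: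
it is a sum of two nonzero elements. -/
def NonAtom {k : ℕ} (g : Fin k → ℕ) (n : ℕ) : Prop :=
  ∃ a b : ℕ, 0 < a ∧ 0 < b ∧ mem g a ∧ mem g b ∧ n = a + b

/-- mod helper -/
lemma mod_two_cases {a b n : ℕ} (ha : a < n) (hb : b < n) :
    (a + b) % n = a + b ∨ ((a + b) % n = a + b - n ∧ n ≤ a + b) := by
  rcases Nat.lt_or_ge (a + b) n with h | h
  · left; exact Nat.mod_eq_of_lt h
  · right
    refine ⟨?_, h⟩
    rw [Nat.mod_eq_sub_mod h, Nat.mod_eq_of_lt (by omega)]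

lemma eq_of_mod_zero {a n : ℕ} (h : a % n = 0) (h1 : 0 < a) (h2 : a < 2 * n) : a = n := by
  obtain ⟨k, rfl⟩ := Nat.dvd_of_mod_eq_zero h
  rcases k with _ | _ | k
  · omega
  · omega
  · exfalso
    have : n * 2 ≤ n * (k + 2) := Nat.mul_le_mul_left n (by omega)
    have h3 : n * (k+1+1) = n * (k+2) := by ring_nf
    omega

lemma exists_add_mul_of_mod_eq {a x n : ℕ} (h : x % n = a % n) (hle : a ≤ x) :
    ∃ d, x = a + d * n := by
  have : n ∣ x - a := (Nat.modEq_iff_dvd' hle).mp h.symm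
  obtain ⟨d, hd⟩ := this
  refine ⟨d, ?_⟩
  rw [Nat.mul_comm d n]
  omega

section Sums
variable {m : ℕ} (g : Fin m → ℕ)

lemma sum_three_ite (p q z0 : Fin m) (d : ℕ) :
    ∑ i, ((if i = p then 1 else 0) + (if i = q then 1 else 0) + (if i = z0 then d else 0)) * g i
      = g p + g q + d * g z0 := by
  simp [add_mul, Finset.sum_add_distrib, ite_mul]

lemma sum_two_ite (p q : Fin m) :
    ∑ i, ((if i = p then 1 else 0) + (if i = q then 1 else 0)) * g i = g p + g q := by
  simp [add_mul, Finset.sum_add_distrib, ite_mul]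

lemma sum_decomp2 (z w : Fin m → ℕ) (t u : Fin m)
    (h : ∀ i, z i = w i + ((if i = t then 1 else 0) + (if i = u then 1 else 0))) :
    ∑ i, z i * g i = ∑ i, w i * g i + (g t + g u) := by
  calc ∑ i, z i * g i = ∑ i, (w i + ((if i = t then 1 else 0) + (if i = u then 1 else 0))) * g i :=
        Finset.sum_congr rfl (fun i _ => by rw [h i])
    _ = _ := by simp [add_mul, Finset.sum_add_distrib, ite_mul, add_assoc]

lemma sum_ite_pair_c (r z0 : Fin m) (c : ℕ) :
    ∑ i, ((if i = r then 1 else 0) + (if i = z0 then c else 0)) * g i = g r + c * g z0 := by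
  simp [add_mul, Finset.sum_add_distrib, ite_mul]

end Sums

section Core
variable {m : ℕ} (hm : 3 ≤ m) (g : Fin m → ℕ)
  (hg0 : g ⟨0, by linarith⟩ = m)
  (hmod : ∀ i : Fin m, g i % m = (i : ℕ))
  (hbig : ∀ i : Fin m, (i : ℕ) ≠ 0 → m < g i)
  (hmin : IsMinGen g)

include hm hg0 hbig in
lemma gpos : ∀ i : Fin m, 0 < g i := by
  intro i
  by_cases h : (i : ℕ) = 0
  · have : i = ⟨0, by omega⟩ := Fin.ext h
    rw [this, hg0]; omega
  · have := hbig i h; omega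

include hm hg0 hbig hmin in
lemma atom_unique (q : Fin m) (hq : (q : ℕ) ≠ 0)
    (y : Fin m → ℕ) (hy : ∑ i, y i * g i = g q) :
    y = fun i => if i = q then 1 else 0 := by
  have hgpos := gpos hm g hg0 hbig
  have hyq1 : y q = 1 := by
    have hle : y q * g q ≤ ∑ i, y i * g i :=
      Finset.single_le_sum (f := fun i => y i * g i) (fun i _ => Nat.zero_le _) (mem_univ q)
    rw [hy] at hle
    have h1 : y q ≤ 1 := by
      by_contra h
      have : 2 * g q ≤ y q * g q := Nat.mul_le_mul_right _ (by omega)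
      have := hgpos q
      omega
    rcases Nat.lt_or_ge (y q) 1 with h | h
    · exact absurd ⟨y, by omega, hy⟩ (hmin q)
    · omega
  have hrest : ∑ j ∈ univ.erase q, y j * g j = 0 := by
    have h1 := Finset.sum_erase_add univ (fun j => y j * g j) (mem_univ q)
    simp only [hy, hyq1, one_mul] at h1
    omega
  funext i
  by_cases hi : i = q
  · simp [hi, hyq1]
  · simp only [if_neg hi]
    have h2 : y i * g i = 0 := by
      refine (Finset.sum_eq_zero_iff.mp hrest) i ?_
      exact Finset.mem_erase.mpr ⟨hi, mem_univ i⟩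
    rcases Nat.mul_eq_zero.mp h2 with h3 | h3
    · exact h3
    · exact absurd h3 (by have := hgpos i; omega)


include hm hg0 hmod hbig in
lemma merge0 (p q : Fin m) (hp : (p : ℕ) ≠ 0) (hq : (q : ℕ) ≠ 0)
    (h0 : ((p : ℕ) + (q : ℕ)) % m = 0) :
    ∃ c, 1 ≤ c ∧ g p + g q = c * m := by
  have hx : (g p + g q) % m = 0 := by
    rw [Nat.add_mod, hmod p, hmod q]; exact h0
  obtain ⟨c, hc⟩ := Nat.dvd_of_mod_eq_zero hx
  have hgp := hbig p hp
  have hgq := hbig q hq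
  rcases Nat.eq_zero_or_pos c with h | h
  · subst h; simp at hc; omega
  · exact ⟨c, h, by rw [hc, Nat.mul_comm]⟩

include hm hg0 hmod hmin in
lemma merge1 (p q : Fin m) (hp : (p : ℕ) ≠ 0) (hq : (q : ℕ) ≠ 0)
    (h0 : ((p : ℕ) + (q : ℕ)) % m ≠ 0) :
    ∃ r : Fin m, (r : ℕ) = ((p : ℕ) + (q : ℕ)) % m ∧
      ∃ c, 1 ≤ c ∧ g p + g q = g r + c * m := by
  set r : Fin m := ⟨((p : ℕ) + (q : ℕ)) % m, Nat.mod_lt _ (by omega)⟩ with hr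
  have hrval : (r : ℕ) = ((p : ℕ) + (q : ℕ)) % m := rfl
  have hrp : r ≠ p := by
    intro h
    have := congrArg Fin.val h
    rw [hrval] at this
    rcases mod_two_cases p.isLt q.isLt with h2 | ⟨h2, h3⟩ <;> omega
  have hrq : r ≠ q := by
    intro h
    have := congrArg Fin.val h
    rw [hrval] at this
    rcases mod_two_cases p.isLt q.isLt with h2 | ⟨h2, h3⟩ <;> omega
  have hrz : r ≠ ⟨0, by omega⟩ := by
    intro h
    have := congrArg Fin.val h
    rw [hrval] at this
    exact h0 this
  have hxmod : (g p + g q) % m = (r : ℕ) := by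
    rw [Nat.add_mod, hmod p, hmod q]
  -- first: g r < g p + g q
  have hlt : g r < g p + g q := by
    by_contra hle
    push_neg at hle
    obtain ⟨d, hd⟩ := exists_add_mul_of_mod_eq (a := g p + g q) (x := g r)
      (by rw [hxmod, hmod r]) hle
    refine hmin r ⟨fun i => (if i = p then 1 else 0) + (if i = q then 1 else 0) +
      (if i = (⟨0, by omega⟩ : Fin m) then d else 0), ?_, ?_⟩
    · simp [if_neg hrp, if_neg hrq, if_neg hrz]
    · rw [sum_three_ite, hg0]
      omega
  obtain ⟨c, hc⟩ := exists_add_mul_of_mod_eq (a := g r) (x := g p + g q)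
    (by rw [hxmod, hmod r]) (by omega)
  rcases Nat.eq_zero_or_pos c with h | h
  · subst h; simp at hc; omega
  · exact ⟨r, hrval, c, h, hc⟩

end Core

section Betti
variable {m : ℕ} (hm : 3 ≤ m) (g : Fin m → ℕ)
  (hg0 : g ⟨0, by linarith⟩ = m)
  (hmod : ∀ i : Fin m, g i % m = (i : ℕ))
  (hbig : ∀ i : Fin m, (i : ℕ) ≠ 0 → m < g i)
  (hmin : IsMinGen g)

include hm hg0 hbig hmin in
lemma side_unique (p' q' : Fin m) (hq' : (q' : ℕ) ≠ 0) (w : Fin m → ℕ)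
    (hw : ∑ i, w i * g i = g p' + g q') (hwp : 0 < w p') :
    w = fun i => (if i = p' then 1 else 0) + (if i = q' then 1 else 0) := by
  classical
  set w' : Fin m → ℕ := fun i => w i - (if i = p' then 1 else 0) with hw'
  have hdec : ∀ i, w i = w' i + (if i = p' then 1 else 0) := by
    intro i
    by_cases h : i = p' <;> simp [hw', h]
    · omega
  have hsum : ∑ i, w i * g i = ∑ i, w' i * g i + g p' := by
    calc ∑ i, w i * g i = ∑ i, (w' i + (if i = p' then 1 else 0)) * g i :=
          Finset.sum_congr rfl fun i _ => by rw [hdec i]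
      _ = _ := by simp [add_mul, Finset.sum_add_distrib, ite_mul]
  have hw'sum : ∑ i, w' i * g i = g q' := by omega
  have hau := atom_unique hm g hg0 hbig hmin q' hq' w' hw'sum
  funext i
  rw [hdec i]
  simp only [hau]
  exact Nat.add_comm _ _

include hm hg0 hmod hbig hmin in
lemma pair_betti (p q : Fin m) (hp : (p : ℕ) ≠ 0) (hq : (q : ℕ) ≠ 0) :
    IsBetti g (g p + g q) := by
  classical
  set n := g p + g q with hn
  set z1 : Fin m → ℕ := fun i => (if i = p then 1 else 0) + (if i = q then 1 else 0) with hz1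
  have hz1f : z1 ∈ facs g n := by
    show ∑ i, z1 i * g i = n
    rw [hn]
    exact sum_two_ite g p q
  have hone : ∀ w ∈ facs g n, ∀ i : Fin m, 0 < z1 i → 0 < w i → w = z1 := by
    intro w hwf i hi1 hi2
    have hwsum : ∑ j, w j * g j = g p + g q := hwf
    have hiq : i = p ∨ i = q := by
      by_contra h
      push_neg at h
      simp [hz1, h.1, h.2] at hi1
    rcases hiq with h | h
    · exact side_unique hm g hg0 hbig hmin p q hq w hwsum (h ▸ hi2)
    · have := side_unique hm g hg0 hbig hmin q p hp w
        (by rw [hwsum]; exact Nat.add_comm _ _) (h ▸ hi2)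
      rw [this, hz1]
      funext j
      exact Nat.add_comm _ _
  have hz2 : ∃ z2 ∈ facs g n, 0 < z2 (⟨0, by omega⟩ : Fin m) := by
    by_cases h0 : ((p : ℕ) + (q : ℕ)) % m = 0
    · obtain ⟨c, hc1, hc2⟩ := merge0 hm g hg0 hmod hbig p q hp hq h0
      refine ⟨fun i => if i = (⟨0, by omega⟩ : Fin m) then c else 0,
        ?_, by simp; omega⟩
      show ∑ i, (if i = (⟨0, by omega⟩ : Fin m) then c else 0) * g i = n
      have h1 : ∑ i, (if i = (⟨0, by omega⟩ : Fin m) then c else 0) * g i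
          = c * g (⟨0, by omega⟩ : Fin m) := by simp [ite_mul]
      have hgz : g (⟨0, by omega⟩ : Fin m) = m := hg0
      rw [h1, hgz, hn, hc2]
    · obtain ⟨r, hrval, c, hc1, hc2⟩ := merge1 hm g hg0 hmod hmin p q hp hq h0
      refine ⟨fun i => (if i = r then 1 else 0)
          + (if i = (⟨0, by omega⟩ : Fin m) then c else 0), ?_, ?_⟩
      · show ∑ i, _ * g i = n
        rw [sum_ite_pair_c]
        have hgz : g (⟨0, by omega⟩ : Fin m) = m := hg0
        simp only [hgz, hn]
        exact hc2.symm
      · by_cases hzr : (⟨0, by omega⟩ : Fin m) = r <;> simp [hzr] <;> omega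
  obtain ⟨z2, hz2f, hz2z⟩ := hz2
  have hiso : ∀ w, Relation.ReflTransGen (adj g n) z1 w → w = z1 := by
    intro w h
    induction h with
    | refl => rfl
    | tail h1 h2 ih =>
      obtain ⟨hf1, hf2, i, hi1, hi2⟩ := h2
      rw [ih] at hi1
      exact hone _ hf2 i hi1 hi2
  refine ⟨z1, hz1f, z2, hz2f, fun hpath => ?_⟩
  have heq := hiso z2 hpath
  have hz1z : z1 (⟨0, by omega⟩ : Fin m) = 0 := by
    have h1 : (⟨0, by omega⟩ : Fin m) ≠ p := fun h => hp (congrArg Fin.val h).symm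
    have h2 : (⟨0, by omega⟩ : Fin m) ≠ q := fun h => hq (congrArg Fin.val h).symm
    simp [hz1, h1, h2]
  rw [heq] at hz2z
  omega

end Betti

section Sums2
variable {m : ℕ} (g : Fin m → ℕ)

lemma sum_decomp_ab (z w : Fin m → ℕ) (t u : Fin m) (a c : ℕ)
    (h : ∀ i, z i = w i + ((if i = t then a else 0) + (if i = u then c else 0))) :
    ∑ i, z i * g i = ∑ i, w i * g i + (a * g t + c * g u) := by
  calc ∑ i, z i * g i
      = ∑ i, (w i + ((if i = t then a else 0) + (if i = u then c else 0))) * g i :=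
        Finset.sum_congr rfl fun i _ => by rw [h i]
    _ = _ := by simp [add_mul, Finset.sum_add_distrib, ite_mul]

lemma sumA_decomp_ab (A : Finset (Fin m)) (z w : Fin m → ℕ) (t u : Fin m) (a c : ℕ)
    (h : ∀ i, z i = w i + ((if i = t then a else 0) + (if i = u then c else 0))) :
    ∑ i ∈ A, z i = ∑ i ∈ A, w i + ((if t ∈ A then a else 0) + (if u ∈ A then c else 0)) := by
  calc ∑ i ∈ A, z i
      = ∑ i ∈ A, (w i + ((if i = t then a else 0) + (if i = u then c else 0))) :=
        Finset.sum_congr rfl fun i _ => by rw [h i]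
    _ = _ := by simp [Finset.sum_add_distrib, Finset.sum_ite_eq']

lemma sum_eq_two {A : Finset (Fin m)} {f : Fin m → ℕ} (h : ∑ i ∈ A, f i = 2) :
    ∃ p ∈ A, ∃ q ∈ A, ∀ i ∈ A, f i = (if i = p then 1 else 0) + (if i = q then 1 else 0) := by
  obtain ⟨p, hpA, hp⟩ := Finset.exists_ne_zero_of_sum_ne_zero (s := A) (f := f)
    (by omega)
  have hself := Finset.sum_erase_add A f hpA
  have hfp : f p ≤ 2 := by
    have := Finset.single_le_sum (f := f) (fun i _ => Nat.zero_le _) hpA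
    omega
  rcases Nat.lt_or_ge (f p) 2 with h1 | h1
  · have hfp1 : f p = 1 := by omega
    have he : ∑ i ∈ A.erase p, f i = 1 := by omega
    obtain ⟨q, hqe, hq⟩ := Finset.exists_ne_zero_of_sum_ne_zero (s := A.erase p) (f := f)
      (by omega)
    have hq2 := Finset.sum_erase_add (A.erase p) f hqe
    have hfq : f q ≤ 1 := by
      have := Finset.single_le_sum (f := f) (fun i _ => Nat.zero_le _) hqe
      omega
    have hfq1 : f q = 1 := by omega
    have hrest : ∑ i ∈ (A.erase p).erase q, f i = 0 := by omega
    have hqp : q ≠ p := (Finset.mem_erase.mp hqe).1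
    refine ⟨p, hpA, q, (Finset.mem_erase.mp hqe).2, ?_⟩
    intro i hiA
    rcases eq_or_ne i p with h2 | h2
    · have hiq : i ≠ q := by rw [h2]; exact fun hh => hqp hh.symm
      rw [if_pos h2, if_neg hiq, h2, hfp1]
    · rcases eq_or_ne i q with h3 | h3
      · rw [if_neg h2, if_pos h3, h3, hfq1]
      · rw [if_neg h2, if_neg h3]
        exact (Finset.sum_eq_zero_iff.mp hrest) i
          (Finset.mem_erase.mpr ⟨h3, Finset.mem_erase.mpr ⟨h2, hiA⟩⟩)
  · have hfp2 : f p = 2 := by omega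
    have hrest : ∑ i ∈ A.erase p, f i = 0 := by omega
    refine ⟨p, hpA, p, hpA, ?_⟩
    intro i hiA
    rcases eq_or_ne i p with h2 | h2
    · rw [if_pos h2, h2, hfp2]
    · rw [if_neg h2]
      exact (Finset.sum_eq_zero_iff.mp hrest) i (Finset.mem_erase.mpr ⟨h2, hiA⟩)

lemma sum_eq_one {A : Finset (Fin m)} {f : Fin m → ℕ} (h : ∑ i ∈ A, f i = 1) :
    ∃ p ∈ A, f p = 1 ∧ ∀ i ∈ A, i ≠ p → f i = 0 := by
  obtain ⟨p, hpA, hp⟩ := Finset.exists_ne_zero_of_sum_ne_zero (s := A) (f := f)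
    (by omega)
  have hself := Finset.sum_erase_add A f hpA
  have hfp : f p ≤ 1 := by
    have := Finset.single_le_sum (f := f) (fun i _ => Nat.zero_le _) hpA
    omega
  have hrest : ∑ i ∈ A.erase p, f i = 0 := by omega
  refine ⟨p, hpA, by omega, fun i hiA hip => ?_⟩
  exact (Finset.sum_eq_zero_iff.mp hrest) i (Finset.mem_erase.mpr ⟨hip, hiA⟩)

end Sums2

section Reduce
variable {m : ℕ} (hm : 3 ≤ m) (g : Fin m → ℕ)
  (hg0 : g ⟨0, by linarith⟩ = m)
  (hmod : ∀ i : Fin m, g i % m = (i : ℕ))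
  (hbig : ∀ i : Fin m, (i : ℕ) ≠ 0 → m < g i)
  (hmin : IsMinGen g)

set_option maxHeartbeats 4000000 in
include hm hg0 hmod hbig hmin in
lemma reduce (K : ℕ) (hcase : K = 0 ∨ Nat.Coprime K m)
    (b : ℕ) (hbK : b % m = K) :
    ∀ s : ℕ, ∀ z : Fin m → ℕ, (∑ i, z i * g i = b) →
      (∑ i ∈ univ.erase (⟨0, by omega⟩ : Fin m), z i = s) →
      (3 ≤ s ∨ (s = 2 ∧ 1 ≤ z (⟨0, by omega⟩ : Fin m))) →
      ∃ p q : Fin m, (p : ℕ) ≠ 0 ∧ (q : ℕ) ≠ 0 ∧ ∃ d, 1 ≤ d ∧ b = g p + g q + d * m := by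
  classical
  intro s
  induction s using Nat.strong_induction_on with
  | _ s ih =>
  intro z hz hs hcond
  have hgz : g (⟨0, by omega⟩ : Fin m) = m := hg0
  set zer : Fin m := ⟨0, by omega⟩ with hzer
  set A : Finset (Fin m) := univ.erase zer with hA
  have hmemA : ∀ i : Fin m, i ∈ A ↔ (i : ℕ) ≠ 0 := by
    intro i
    rw [hA, Finset.mem_erase]
    constructor
    · rintro ⟨h1, _⟩ h2
      exact h1 (Fin.ext h2)
    · exact fun h => ⟨fun he => h (congrArg Fin.val he), mem_univ i⟩
  have hzerA : zer ∉ A := Finset.notMem_erase zer univ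
  have hsplitb : ∑ i ∈ A, z i * g i + z zer * m = b := by
    have h1 := Finset.sum_erase_add univ (fun i => z i * g i) (mem_univ zer)
    simp only [hz, hgz] at h1
    exact h1
  rcases hcond with h3 | ⟨h2, hz0⟩
  · -- 3 ≤ s
    by_cases hstuck : ∀ t u : Fin m, (t : ℕ) ≠ 0 → (u : ℕ) ≠ 0 → 0 < z t → 0 < z u →
        (t = u → 2 ≤ z t) → ((t : ℕ) + (u : ℕ)) % m = 0
    · -- stuck case : single support
      obtain ⟨t, htA, htz⟩ := Finset.exists_ne_zero_of_sum_ne_zero (s := A) (f := z) (by omega)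
      have htv : (t : ℕ) ≠ 0 := (hmemA t).mp htA
      have htzpos : 0 < z t := Nat.pos_of_ne_zero htz
      have hsingle : ∀ u ∈ A, z u ≠ 0 → u = t := by
        intro u huA huz
        by_contra hne
        have huv := (hmemA u).mp huA
        have huzpos : 0 < z u := Nat.pos_of_ne_zero huz
        have h1 : ((t : ℕ) + (u : ℕ)) % m = 0 :=
          hstuck t u htv huv htzpos huzpos (fun h => absurd h.symm hne)
        have htm : (t : ℕ) + (u : ℕ) = m :=
          eq_of_mod_zero h1 (by omega) (by have := t.isLt; have := u.isLt; omega)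
        have hzt1 : z t = 1 := by
          by_contra h2
          have h4 := hstuck t t htv htv htzpos htzpos (fun _ => by omega)
          have h5 : (t : ℕ) + (t : ℕ) = m :=
            eq_of_mod_zero h4 (by omega) (by have := t.isLt; omega)
          exact hne (Fin.ext (by omega))
        have hzu1 : z u = 1 := by
          by_contra h2
          have h4 := hstuck u u huv huv huzpos huzpos (fun _ => by omega)
          have h5 : (u : ℕ) + (u : ℕ) = m :=
            eq_of_mod_zero h4 (by omega) (by have := u.isLt; omega)
          exact hne (Fin.ext (by omega))
        have hothers : ∀ v ∈ A, v ≠ t → v ≠ u → z v = 0 := by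
          intro v hvA hvt hvu
          by_contra h2
          have hvv := (hmemA v).mp hvA
          have hvzpos : 0 < z v := Nat.pos_of_ne_zero h2
          have e1 := hstuck t v htv hvv htzpos hvzpos (fun h => absurd h.symm hvt)
          have e2 := hstuck u v huv hvv huzpos hvzpos (fun h => absurd h.symm hvu)
          have m1 : (t : ℕ) + (v : ℕ) = m :=
            eq_of_mod_zero e1 (by omega) (by have := t.isLt; have := v.isLt; omega)
          have m2 : (u : ℕ) + (v : ℕ) = m :=
            eq_of_mod_zero e2 (by omega) (by have := u.isLt; have := v.isLt; omega)
          exact hne (Fin.ext (by omega))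
        have huA' : u ∈ A.erase t := Finset.mem_erase.mpr ⟨hne, huA⟩
        have hsum2 : ∑ i ∈ A, z i = 2 := by
          have e1 := Finset.sum_erase_add A z htA
          have e2 := Finset.sum_erase_add (A.erase t) z huA'
          have e3 : ∑ i ∈ (A.erase t).erase u, z i = 0 := by
            refine Finset.sum_eq_zero fun v hv => ?_
            have hv1 := Finset.mem_erase.mp hv
            have hv2 := Finset.mem_erase.mp hv1.2
            exact hothers v hv2.2 hv2.1 hv1.1
          omega
        omega
      -- single support established
      have hzts : z t = s := by
        have e1 := Finset.sum_erase_add A z htA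
        have e0 : ∑ i ∈ A.erase t, z i = 0 := by
          refine Finset.sum_eq_zero fun v hv => ?_
          have hv1 := Finset.mem_erase.mp hv
          by_contra h2
          exact hv1.1 (hsingle v hv1.2 h2)
        omega
      have h2t : ((t : ℕ) + (t : ℕ)) % m = 0 :=
        hstuck t t htv htv htzpos htzpos (fun _ => by omega)
      have hAg : ∑ i ∈ A, z i * g i = z t * g t := by
        have e1 := Finset.sum_erase_add A (fun i => z i * g i) htA
        have e0 : ∑ i ∈ A.erase t, z i * g i = 0 := by
          refine Finset.sum_eq_zero fun v hv => ?_
          have hv1 := Finset.mem_erase.mp hv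
          by_contra h2
          refine hv1.1 (hsingle v hv1.2 ?_)
          intro h4
          exact h2 (by rw [h4, Nat.zero_mul])
        omega
      have hbform : b = z t * g t + z zer * m := by omega
      have hKform : K = (z t * (t : ℕ)) % m := by
        have e1 : b % m = (z t * g t) % m := by
          rw [hbform, Nat.add_mul_mod_self_right]
        have e2 : (z t * g t) % m = (z t * (t : ℕ)) % m := by
          rw [Nat.mul_mod, hmod t, Nat.mul_mod (z t) (t : ℕ), Nat.mod_eq_of_lt t.isLt]
        rw [← hbK, e1, e2]
      obtain ⟨e, he⟩ := Nat.dvd_of_mod_eq_zero h2t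
      rcases Nat.even_or_odd s with hpar | hpar
      · -- even : merge (t,t) with r = 0
        obtain ⟨j, hj⟩ := hpar
        have hs4 : 4 ≤ s := by omega
        obtain ⟨c, hc1, hc2⟩ := merge0 hm g hg0 hmod hbig t t htv htv h2t
        set w : Fin m → ℕ := fun i => z i - (if i = t then 2 else 0) with hw
        have hdec : ∀ i, z i = w i + ((if i = t then 2 else 0) + (if i = t then 0 else 0)) := by
          intro i
          rcases eq_or_ne i t with h4 | h4
          · rw [if_pos h4, if_pos h4]
            have e2 : z i = z t := by rw [h4]
            simp only [hw, if_pos h4]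
            omega
          · rw [if_neg h4, if_neg h4]
            simp only [hw, if_neg h4]
            omega
        set z' : Fin m → ℕ := fun i => w i + ((if i = zer then c else 0) + (if i = zer then 0 else 0))
          with hz'
        have hdec' : ∀ i, z' i = w i + ((if i = zer then c else 0) + (if i = zer then 0 else 0)) :=
          fun i => rfl
        have hsum1 := sum_decomp_ab g z w t t 2 0 hdec
        have hsum2 := sum_decomp_ab g z' w zer zer c 0 hdec'
        have hsA1 := sumA_decomp_ab A z w t t 2 0 hdec
        have hsA2 := sumA_decomp_ab A z' w zer zer c 0 hdec'
        simp only [if_pos htA, ite_self, add_zero] at hsA1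
        simp only [if_neg hzerA, ite_self, add_zero, zero_add] at hsA2
        have hz'b : ∑ i, z' i * g i = b := by
          rw [hsum2, hgz]
          omega
        have hz'A : ∑ i ∈ A, z' i = s - 2 := by omega
        have hz'zer : 1 ≤ z' zer := by
          have e2 : z' zer = w zer + (c + 0) := by simp [hz']
          omega
        exact ih (s - 2) (by omega) z' hz'b hz'A
          (if h4 : 5 ≤ s then Or.inl (by omega) else Or.inr ⟨by omega, hz'zer⟩)
      · -- odd : contradiction with hcase
        obtain ⟨j, hj⟩ := hpar
        have hst : (z t * (t : ℕ)) % m = (t : ℕ) := by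
          have e1 : z t * (t : ℕ) = m * (j * e) + (t : ℕ) := by
            rw [hzts, hj]
            calc (2 * j + 1) * (t : ℕ) = j * ((t : ℕ) + (t : ℕ)) + (t : ℕ) := by ring
              _ = j * (m * e) + (t : ℕ) := by rw [he]
              _ = m * (j * e) + (t : ℕ) := by ring
          rw [e1, Nat.mul_add_mod, Nat.mod_eq_of_lt t.isLt]
        have hKt : K = (t : ℕ) := by rw [hKform, hst]
        rcases hcase with h4 | h4
        · exact absurd (hKt ▸ h4) htv
        · exfalso
          have hdvd : m ∣ 2 * K := ⟨e, by omega⟩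
          have : m ∣ 2 := h4.symm.dvd_of_dvd_mul_right hdvd
          have := Nat.le_of_dvd (by norm_num) this
          omega
    · -- non-stuck : merge a pair with nonzero residue
      push_neg at hstuck
      obtain ⟨t, u, htv, huv, htz, huz, hpair, hr0⟩ := hstuck
      obtain ⟨r, hrval, c, hc1, hc2⟩ := merge1 hm g hg0 hmod hmin t u htv huv hr0
      have hrv : (r : ℕ) ≠ 0 := by rw [hrval]; exact hr0
      have hrA : r ∈ A := (hmemA r).mpr hrv
      have htA : t ∈ A := (hmemA t).mpr htv
      have huA : u ∈ A := (hmemA u).mpr huv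
      set w : Fin m → ℕ := fun i => z i - (if i = t then 1 else 0) - (if i = u then 1 else 0)
        with hw
      have hdec : ∀ i, z i = w i + ((if i = t then 1 else 0) + (if i = u then 1 else 0)) := by
        intro i
        rcases eq_or_ne i t with h4 | h4 <;> rcases eq_or_ne i u with h5 | h5
        · have h6 := hpair (h4.symm.trans h5)
          have e2 : z i = z t := by rw [h4]
          rw [if_pos h4, if_pos h5]
          simp only [hw, if_pos h4, if_pos h5]
          omega
        · have e2 : z i = z t := by rw [h4]
          rw [if_pos h4, if_neg h5]
          simp only [hw, if_pos h4, if_neg h5]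
          omega
        · have e2 : z i = z u := by rw [h5]
          rw [if_neg h4, if_pos h5]
          simp only [hw, if_neg h4, if_pos h5]
          omega
        · rw [if_neg h4, if_neg h5]
          simp only [hw, if_neg h4, if_neg h5]
          omega
      set z' : Fin m → ℕ := fun i => w i + ((if i = r then 1 else 0) + (if i = zer then c else 0))
        with hz'
      have hdec' : ∀ i, z' i = w i + ((if i = r then 1 else 0) + (if i = zer then c else 0)) :=
        fun i => rfl
      have hsum1 := sum_decomp_ab g z w t u 1 1 hdec
      have hsum2 := sum_decomp_ab g z' w r zer 1 c hdec'
      have hsA1 := sumA_decomp_ab A z w t u 1 1 hdec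
      have hsA2 := sumA_decomp_ab A z' w r zer 1 c hdec'
      simp only [if_pos htA, if_pos huA, ite_self, add_zero] at hsA1
      simp only [if_pos hrA, if_neg hzerA, ite_self, add_zero, zero_add] at hsA2
      have hz'b : ∑ i, z' i * g i = b := by
        rw [hsum2, hgz]
        rw [one_mul]
        have e2 : 1 * g t + 1 * g u = g r + c * m := by rw [one_mul, one_mul]; exact hc2
        omega
      have hz'A : ∑ i ∈ A, z' i = s - 1 := by omega
      have hz'zer : 1 ≤ z' zer := by
        have hzt : zer ≠ r := fun h => hrv (congrArg Fin.val h).symm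
        have e2 : z' zer = w zer + (0 + c) := by simp [hz', if_neg hzt]
        omega
      exact ih (s - 1) (by omega) z' hz'b hz'A
        (if h4 : 4 ≤ s then Or.inl (by omega) else Or.inr ⟨by omega, hz'zer⟩)
  · -- s = 2 with z zer ≥ 1 : direct extraction
    obtain ⟨p, hpA, q, hqA, hdesc⟩ := sum_eq_two (h2 ▸ hs)
    have hb' : ∑ i ∈ A, z i * g i = g p + g q := by
      calc ∑ i ∈ A, z i * g i
          = ∑ i ∈ A, ((if i = p then 1 else 0) + (if i = q then 1 else 0)) * g i :=
            Finset.sum_congr rfl fun i hi => by rw [hdesc i hi]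
        _ = g p + g q := by
            simp [add_mul, Finset.sum_add_distrib, ite_mul, Finset.sum_ite_eq', hpA, hqA]
    exact ⟨p, q, (hmemA p).mp hpA, (hmemA q).mp hqA, z zer, hz0, by omega⟩

end Reduce

set_option maxHeartbeats 1000000 in
theorem stmt12 (m : ℕ) (hm : 3 ≤ m) (g : Fin m → ℕ)
    (hg0 : g ⟨0, by omega⟩ = m)
    (hmod : ∀ i : Fin m, g i % m = (i : ℕ))
    (hbig : ∀ i : Fin m, (i : ℕ) ≠ 0 → m < g i)
    (hmin : IsMinGen g)
    (K : ℕ) (hK : K < m) (b : ℕ)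
    (hb : IsBetti g b) (hbK : b % m = K)
    (hsmall : ∀ b' : ℕ, IsBetti g b' → b' % m = K → b ≤ b')
    (hcase : K = 0 ∨ Nat.Coprime K m) :
    (lengthSet g b).ncard ≤ 2 := by
  classical
  have hgz : g (⟨0, by omega⟩ : Fin m) = m := hg0
  set zer : Fin m := ⟨0, by omega⟩ with hzer
  set A : Finset (Fin m) := univ.erase zer with hA
  have hmemA : ∀ i : Fin m, i ∈ A ↔ (i : ℕ) ≠ 0 := by
    intro i
    rw [hA, Finset.mem_erase]
    constructor
    · rintro ⟨h1, _⟩ h2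
      exact h1 (Fin.ext h2)
    · exact fun h => ⟨fun he => h (congrArg Fin.val he), mem_univ i⟩
  have hzerA : zer ∉ A := Finset.notMem_erase zer univ
  set V : ℕ := if K = 0 then b / m else (b - g ⟨K, hK⟩) / m + 1 with hV
  have hsub : lengthSet g b ⊆ {2, V} := by
    rintro L ⟨z, hzf, rfl⟩
    have hz : ∑ i, z i * g i = b := hzf
    have hsplitb : ∑ i ∈ A, z i * g i + z zer * m = b := by
      have h1 := Finset.sum_erase_add univ (fun i => z i * g i) (mem_univ zer)
      simp only [hz, hgz] at h1
      exact h1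
    have hlen : ∑ i, z i = ∑ i ∈ A, z i + z zer := by
      exact (Finset.sum_erase_add univ z (mem_univ zer)).symm
    simp only [Set.mem_insert_iff, Set.mem_singleton_iff]
    set s := ∑ i ∈ A, z i with hsdef
    by_cases hbad : 3 ≤ s ∨ (s = 2 ∧ 1 ≤ z zer)
    · exfalso
      obtain ⟨p, q, hp, hq, d, hd, hbd⟩ :=
        reduce hm g hg0 hmod hbig hmin K hcase b hbK s z hz hsdef.symm hbad
      have hBetti := pair_betti hm g hg0 hmod hbig hmin p q hp hq
      have hmod' : (g p + g q) % m = K := by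
        rw [← hbK, hbd, Nat.add_mul_mod_self_right]
      have hle := hsmall (g p + g q) hBetti hmod'
      have hmd : m ≤ d * m := Nat.le_mul_of_pos_left m hd
      omega
    · push_neg at hbad
      have hs2 : s ≤ 2 := by omega
      rcases Nat.lt_or_ge s 2 with hslt | hsge
      · rcases Nat.lt_or_ge s 1 with hs0 | hs1
        · -- s = 0
          have hs0' : s = 0 := by omega
          have hall : ∀ v ∈ A, z v = 0 :=
            Finset.sum_eq_zero_iff.mp (by rw [← hsdef]; exact hs0')
          have hAg : ∑ i ∈ A, z i * g i = 0 :=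
            Finset.sum_eq_zero fun v hv => by rw [hall v hv, Nat.zero_mul]
          have hbz : z zer * m = b := by omega
          have hK0 : K = 0 := by rw [← hbK, ← hbz, Nat.mul_mod_left]
          right
          rw [hV, if_pos hK0]
          have e4 : b / m = z zer := by
            rw [← hbz]
            exact Nat.mul_div_cancel _ (show 0 < m by omega)
          omega
        · -- s = 1
          have hs1' : s = 1 := by omega
          obtain ⟨p, hpA, hp1, hrest⟩ := sum_eq_one (by rw [← hsdef]; exact hs1')
          have hAg : ∑ i ∈ A, z i * g i = g p := by
            have e1 := Finset.sum_erase_add A (fun i => z i * g i) hpA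
            have e0 : ∑ i ∈ A.erase p, z i * g i = 0 := by
              refine Finset.sum_eq_zero fun v hv => ?_
              have hv1 := Finset.mem_erase.mp hv
              rw [hrest v hv1.2 hv1.1, Nat.zero_mul]
            rw [hp1] at e1
            omega
          have hb2 : g p + z zer * m = b := by omega
          have hpK : (p : ℕ) = K := by
            have e2 : b % m = (p : ℕ) := by
              rw [← hb2, Nat.add_mul_mod_self_right, hmod p]
            omega
          have hKne : K ≠ 0 := by rw [← hpK]; exact (hmemA p).mp hpA
          right
          rw [hV, if_neg hKne]
          have hpfin : (⟨K, hK⟩ : Fin m) = p := Fin.ext hpK.symm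
          rw [hpfin]
          have e3 : b - g p = z zer * m := by omega
          have e4 : z zer * m / m = z zer := Nat.mul_div_cancel _ (show 0 < m by omega)
          rw [e3]
          omega
      · -- s = 2, z zer = 0
        have hz0 : z zer = 0 := by
          rcases Nat.lt_or_ge (z zer) 1 with h | h
          · omega
          · exact absurd (hbad.2 (by omega)) (by omega)
        left
        omega
  have h1 : (lengthSet g b).ncard ≤ ({2, V} : Set ℕ).ncard :=
    Set.ncard_le_ncard hsub (Set.toFinite _)
  have h2 : ({2, V} : Set ℕ).ncard ≤ 2 := by
    have h3 := Set.ncard_insert_le 2 ({V} : Set ℕ)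
    simpa [Set.ncard_singleton] using h3
  omega
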